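/- Let R be a non-zero order. Then for each (A,G) ∈ GpRg(R) the group G is finite of order at most the rank of R as a ℤ-module, and the partially ordered set GpRg(R) contains a maximal element. -/

import Mathlib

/-- The natural ring homomorphism `A[G] → R` for a subring `A ⊆ R` and a subgroup `G ⊆ Rˣ`. -/
noncomputable def gpRgHom {R : Type*} [CommRing R] (A : Subring R) (G : Subgroup Rˣ) :
    MonoidAlgebra A G →+* R :=
  MonoidAlgebra.liftNCRingHom A.subtype ((Units.coeHom R).comp G.subtype)
    (fun _ _ => Commute.all _ _)

/-- `A[G] = R`: the natural map `A[G] → R` is a ring isomorphism. -/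
def IsGpRg {R : Type*} [CommRing R] (A : Subring R) (G : Subgroup Rˣ) : Prop :=
  Function.Bijective (gpRgHom A G)

variable {R : Type*} [CommRing R]

lemma gpRgHom_single (A : Subring R) (G : Subgroup Rˣ) (g : G) (a : A) :
    gpRgHom A G (MonoidAlgebra.single g a) = (a : R) * ((g : Rˣ) : R) := by
  simp [gpRgHom, MonoidAlgebra.liftNCRingHom]

lemma gpRgHom_mapRange {A B : Subring R} (h : B ≤ A) (G : Subgroup Rˣ) (f : MonoidAlgebra B G) :
    gpRgHom A G (MonoidAlgebra.ofCoeff (Finsupp.mapRange (Subring.inclusion h) (map_zero _) f.coeff)) = gpRgHom B G f := by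
  induction f using MonoidAlgebra.induction with
  | zero => simp
  | single_add g b f _ _ ih =>
    rw [MonoidAlgebra.coeff_add, MonoidAlgebra.coeff_single, Finsupp.mapRange_add (by exact fun a b => map_add _ a b), map_add,
      Finsupp.mapRange_single, MonoidAlgebra.ofCoeff_add, map_add, MonoidAlgebra.ofCoeff_single, ih]
    congr 1
    rw [gpRgHom_single, gpRgHom_single]
    rfl

lemma isGpRg_top_bot : IsGpRg (⊤ : Subring R) (⊥ : Subgroup Rˣ) := by
  constructor
  · intro f g hfg
    rw [← MonoidAlgebra.ofCoeff_coeff f, ← MonoidAlgebra.ofCoeff_coeff g, Finsupp.unique_single f.coeff, Finsupp.unique_single g.coeff, MonoidAlgebra.ofCoeff_single, MonoidAlgebra.ofCoeff_single] at hfg ⊢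
    rw [gpRgHom_single, gpRgHom_single] at hfg
    have : (f.coeff default : R) = g.coeff default := by simpa using hfg
    rw [← MonoidAlgebra.ofCoeff_single, ← MonoidAlgebra.ofCoeff_single, MonoidAlgebra.ofCoeff_inj, Finsupp.unique_single_eq_iff]
    exact Subtype.ext this
  · intro r
    refine ⟨MonoidAlgebra.single (1 : (⊥ : Subgroup Rˣ)) ⟨r, trivial⟩, ?_⟩
    rw [gpRgHom_single]
    simp

lemma IsGpRg.linearIndependent [Nontrivial R] [Module.Free ℤ R] {A : Subring R}
    {G : Subgroup Rˣ} (h : IsGpRg A G) :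
    LinearIndependent ℤ (fun g : G => ((g : Rˣ) : R)) := by
  classical
  rw [linearIndependent_iff']
  intro s c hc i hi
  have h0 : gpRgHom A G (∑ j ∈ s, MonoidAlgebra.single j (c j • (1 : A))) = 0 := by
    rw [map_sum]
    rw [← hc]
    refine Finset.sum_congr rfl fun j _ => ?_
    rw [gpRgHom_single]
    push_cast
    rw [smul_mul_assoc, one_mul]
  have hf0 : (∑ j ∈ s, MonoidAlgebra.single j (c j • (1 : A))) = 0 :=
    h.1 (by rw [h0, map_zero])
  have hFi : (∑ j ∈ s, (Finsupp.single j (c j • (1 : A)) : G →₀ A)) i = c i • (1 : A) := by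
    rw [Finsupp.finset_sum_apply]
    simp only [Finsupp.single_apply, Finset.sum_ite_eq' s i, if_pos hi]
  have hzero : c i • (1 : A) = 0 := by
    rw [← hFi]
    have hf0' := congrArg MonoidAlgebra.coeff hf0
    rw [MonoidAlgebra.coeff_sum] at hf0'
    exact Finsupp.ext_iff.mp hf0' i
  have hR : c i • (1 : R) = 0 := by
    have := congrArg (Subring.subtype A) hzero
    simpa using this
  rcases smul_eq_zero.mp hR with h1 | h1
  · exact h1
  · exact absurd h1 one_ne_zero

lemma IsGpRg.antisymm {A B : Subring R} {G : Subgroup Rˣ} (hA : IsGpRg A G)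
    (hB : IsGpRg B G) (hBA : B ≤ A) : A ≤ B := by
  intro a ha
  obtain ⟨f, hf⟩ := hB.2 a
  have h1 : gpRgHom A G (MonoidAlgebra.ofCoeff (Finsupp.mapRange (Subring.inclusion hBA) (map_zero _) f.coeff))
      = gpRgHom A G (MonoidAlgebra.single (1 : G) ⟨a, ha⟩) := by
    rw [gpRgHom_mapRange, hf, gpRgHom_single]
    simp
  have h2 := hA.1 h1
  have h3 : Finsupp.mapRange (Subring.inclusion hBA) (map_zero _) f.coeff (1 : G) = (MonoidAlgebra.single (1 : G) (⟨a, ha⟩ : A)).coeff (1 : G) := by rw [← h2]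
  rw [Finsupp.mapRange_apply, MonoidAlgebra.coeff_single, Finsupp.single_eq_same] at h3
  have : a = ((f.coeff 1 : B) : R) := by
    have := congrArg (Subring.subtype A) h3
    simpa using this.symm
  rw [this]
  exact (f.coeff 1).2

/-- Let `R` be a non-zero order. Then for each `(A,G) ∈ GpRg(R)` the group
`G` is finite of order at most the rank of `R` as a `ℤ`-module, and `GpRg(R)` (ordered by
`(B,H) ≤ (A,G) ↔ H ⊆ G ∧ B ⊇ A`) contains a maximal element. -/
theorem gpRg_finite_and_maximal
    {R : Type u} [CommRing R] [Nontrivial R] [Module.Free ℤ R] [Module.Finite ℤ R] :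
    (∀ (A : Subring R) (G : Subgroup Rˣ), IsGpRg A G →
      Finite G ∧ Nat.card G ≤ Module.finrank ℤ R) ∧
    ∃ (A : Subring R) (G : Subgroup Rˣ), IsGpRg A G ∧
      ∀ (B : Subring R) (H : Subgroup Rˣ), IsGpRg B H → G ≤ H → B ≤ A → B = A ∧ H = G := by
  have key : ∀ (A : Subring R) (G : Subgroup Rˣ), IsGpRg A G →
      Finite G ∧ Nat.card G ≤ Module.finrank ℤ R := by
    intro A G h
    have li := h.linearIndependent
    have hfin : Finite G := li.finite_of_isNoetherian
    refine ⟨hfin, ?_⟩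
    haveI := Fintype.ofFinite G
    rw [Nat.card_eq_fintype_card]
    exact li.fintype_card_le_finrank
  refine ⟨key, ?_⟩
  set S : Set ℕ := {n | ∃ (A : Subring R) (G : Subgroup Rˣ), IsGpRg A G ∧ Nat.card G = n} with hS
  have hne : S.Nonempty := ⟨1, ⊤, ⊥, isGpRg_top_bot, Nat.card_unique⟩
  have hbdd : BddAbove S := by
    refine ⟨Module.finrank ℤ R, fun n hn => ?_⟩
    obtain ⟨A, G, hAG, rfl⟩ := hn
    exact (key A G hAG).2
  obtain ⟨A, G, hAG, hcard⟩ := Nat.sSup_mem hne hbdd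
  refine ⟨A, G, hAG, fun B H hBH hGH hBA => ?_⟩
  haveI : Finite H := (key B H hBH).1
  have hHG : H = G := by
    have hcardH : Nat.card H ≤ Nat.card G := by
      rw [hcard]
      exact le_csSup hbdd ⟨B, H, hBH, rfl⟩
    exact (Subgroup.eq_of_le_of_card_ge hGH hcardH).symm
  subst hHG
  exact ⟨le_antisymm hBA (hAG.antisymm hBH hBA), rfl⟩
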